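/- Fix x ∈ E, ν₀ ∈ (E →L[ℝ] ℝ), define ν t := ν₀ ∘ D(f (−t))(f t x), and let X : E → E be a C¹ vector field. Then the function η(t) := ν t ( X (f t x) ) is differentiable with η'(t) = ν t ( DX(f t x)(F (f t x)) − DF(f t x)(X (f t x)) ) for all t ∈ ℝ; that is, the derivative along the orbit of the pairing of the adjoint covector with X equals its pairing with the Lie derivative L_F X = ∇_F X − ∇_X F. -/

import Mathlib

open Set Filter Topology

set_option maxHeartbeats 1000000
set_option synthInstance.maxHeartbeats 400000

section AuxFlow

variable {E : Type*} [NormedAddCommGroup E] [NormedSpace ℝ E]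

lemma bootstrap_bound {E : Type*} [NormedAddCommGroup E] [NormedSpace ℝ E]
    {g g' : ℝ → E} {b C D : ℝ} (hC : 0 ≤ C) (hb : 0 ≤ b)
    (hderiv : ∀ τ ∈ Set.Icc (0:ℝ) b, HasDerivAt g (g' τ) τ)
    (hkey : ∀ τ ∈ Set.Icc (0:ℝ) b, ‖g τ - g 0‖ ≤ D → ‖g' τ‖ ≤ C)
    (hCbD : C * b < D) :
    ∀ τ ∈ Set.Icc (0:ℝ) b, ‖g τ - g 0‖ ≤ C * τ := by
  set A : Set ℝ := {τ | τ ∈ Set.Icc (0:ℝ) b ∧ ∀ σ ∈ Set.Icc (0:ℝ) τ, ‖g σ - g 0‖ ≤ C * σ} with hA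
  have h0A : (0:ℝ) ∈ A := by
    refine ⟨⟨le_refl 0, hb⟩, fun σ hσ => ?_⟩
    have : σ = 0 := le_antisymm hσ.2 hσ.1
    simp [this]
  have hbdd : BddAbove A := ⟨b, fun τ hτ => hτ.1.2⟩
  have hne : A.Nonempty := ⟨0, h0A⟩
  set T := sSup A with hT
  have hT0 : 0 ≤ T := le_csSup hbdd h0A
  have hTb : T ≤ b := csSup_le hne fun τ hτ => hτ.1.2
  -- T satisfies the property on [0, T]
  have hTA : ∀ σ ∈ Set.Icc (0:ℝ) T, ‖g σ - g 0‖ ≤ C * σ := by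
    intro σ hσ
    rcases lt_or_eq_of_le hσ.2 with hlt | heq
    · obtain ⟨τ, hτA, hστ⟩ := exists_lt_of_lt_csSup hne hlt
      exact hτA.2 σ ⟨hσ.1, hστ.le⟩
    · -- σ = T; use continuity from the left
      rcases eq_or_lt_of_le hσ.1 with h0 | h0
      · simp [← h0]
      · -- 0 < σ = T
        have hcont : ContinuousAt (fun s => ‖g s - g 0‖) σ :=
          (((hderiv σ ⟨hσ.1, le_trans hσ.2 hTb⟩).continuousAt).sub continuousAt_const).norm
        have htend : Tendsto (fun s => ‖g s - g 0‖) (𝓝[<] σ) (𝓝 ‖g σ - g 0‖) :=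
          hcont.continuousWithinAt.tendsto
        have htend2 : Tendsto (fun s => C * s) (𝓝[<] σ) (𝓝 (C * σ)) :=
          ((continuous_const.mul continuous_id).tendsto σ).mono_left nhdsWithin_le_nhds
        refine le_of_tendsto_of_tendsto htend htend2 ?_
        filter_upwards [Ioo_mem_nhdsLT_of_mem (⟨h0, le_refl σ⟩ : σ ∈ Set.Ioc 0 σ)] with s hs
        obtain ⟨τ, hτA, hsτ⟩ := exists_lt_of_lt_csSup hne (heq ▸ hs.2 : s < T)
        exact hτA.2 s ⟨hs.1.le, hsτ.le⟩
  -- T = b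
  have hTeq : T = b := by
    by_contra hne'
    have hTltb : T < b := lt_of_le_of_ne hTb hne'
    have hgTD : ‖g T - g 0‖ < D := by
      calc ‖g T - g 0‖ ≤ C * T := hTA T ⟨hT0, le_refl T⟩
        _ ≤ C * b := by nlinarith
        _ < D := hCbD
    have hcont : ContinuousAt (fun s => ‖g s - g 0‖) T :=
      (((hderiv T ⟨hT0, hTb⟩).continuousAt).sub continuousAt_const).norm
    have hev : ∀ᶠ s in 𝓝 T, ‖g s - g 0‖ < D := hcont.eventually_lt_const hgTD
    obtain ⟨δ, hδ0, hδ⟩ := Metric.eventually_nhds_iff.1 hev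
    set T' := min b (T + δ / 2) with hT'
    have hTT' : T < T' := lt_min hTltb (by linarith)
    have hT'b : T' ≤ b := min_le_left _ _
    have hT'0 : 0 ≤ T' := le_trans hT0 hTT'.le
    have hDbound : ∀ σ ∈ Set.Icc (0:ℝ) T', ‖g σ - g 0‖ ≤ D := by
      intro σ hσ
      rcases le_or_gt σ T with h1 | h1
      · exact le_trans (hTA σ ⟨hσ.1, h1⟩) (le_of_lt (lt_of_le_of_lt (by nlinarith) hCbD))
      · have : dist σ T < δ := by
          rw [Real.dist_eq, abs_of_pos (by linarith)]
          have : σ ≤ T + δ / 2 := le_trans hσ.2 (min_le_right _ _)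
          linarith
        exact (hδ this).le
    have hgood : ∀ σ ∈ Set.Icc (0:ℝ) T', ‖g' σ‖ ≤ C := fun σ hσ =>
      hkey σ ⟨hσ.1, le_trans hσ.2 hT'b⟩ (hDbound σ hσ)
    have hMVT : ∀ σ ∈ Set.Icc (0:ℝ) T', ‖g σ - g 0‖ ≤ C * σ := by
      intro σ hσ
      have := Convex.norm_image_sub_le_of_norm_hasDerivWithin_le
        (f := g) (f' := g') (s := Set.Icc (0:ℝ) T')
        (fun y hy => (hderiv y ⟨hy.1, le_trans hy.2 hT'b⟩).hasDerivWithinAt)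
        hgood (convex_Icc _ _) (⟨le_refl 0, hT'0⟩ : (0:ℝ) ∈ Set.Icc (0:ℝ) T') hσ
      simpa [abs_of_nonneg hσ.1] using this
    have : T' ∈ A := ⟨⟨hT'0, hT'b⟩, hMVT⟩
    exact absurd (le_csSup hbdd this) (not_le.2 hTT')
  intro τ hτ
  exact hTA τ (by rw [hTeq]; exact hτ)


variable [FiniteDimensional ℝ E]

lemma flow_fderiv_taylor
    (F : E → E) (hF : ContDiff ℝ 2 F)
    (f : ℝ → E → E)
    (hf0 : ∀ x : E, f 0 x = x)
    (hflow : ∀ t : ℝ, ∀ x : E, HasDerivAt (fun τ : ℝ => f τ x) (F (f t x)) t)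
    (hfC2 : ∀ t : ℝ, ContDiff ℝ 2 (f t)) (p : E) :
    ∃ C, 0 ≤ C ∧ ∃ τ₀ > (0:ℝ), ∀ h : ℝ, 0 ≤ h → h ≤ τ₀ →
      ‖fderiv ℝ (f h) p - ContinuousLinearMap.id ℝ E - h • fderiv ℝ F p‖ ≤ C * h ^ 2 := by
  have hFd : Differentiable ℝ F := hF.differentiable (by norm_num)
  have hDF1 : ContDiff ℝ 1 (fderiv ℝ F) := hF.fderiv_right (by norm_num)
  have hDFd : Differentiable ℝ (fderiv ℝ F) := hDF1.differentiable (by norm_num)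
  have hDDFc : Continuous (fderiv ℝ (fderiv ℝ F)) :=
    (hDF1.fderiv_right (m := 0) (by norm_num)).continuous
  set S : Set E := Metric.closedBall p 3 with hS
  have hScomp : IsCompact S := isCompact_closedBall p 3
  have hpS : p ∈ S := Metric.mem_closedBall_self (by norm_num)
  -- bound on ‖F‖
  obtain ⟨M0, hM0b⟩ := hScomp.exists_bound_of_continuousOn hF.continuous.continuousOn
  set M : ℝ := max M0 1 with hM
  have hM1 : (1:ℝ) ≤ M := le_max_right _ _
  have hMpos : (0:ℝ) < M := lt_of_lt_of_le one_pos hM1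
  have hMb : ∀ y ∈ S, ‖F y‖ ≤ M := fun y hy => le_trans (hM0b y hy) (le_max_left _ _)
  -- bound on ‖DF‖
  obtain ⟨K0, hK0b⟩ := hScomp.exists_bound_of_continuousOn hDF1.continuous.continuousOn
  set K : ℝ := max K0 0 with hK
  have hKnn : (0:ℝ) ≤ K := le_max_right _ _
  have hKb : ∀ y ∈ S, ‖fderiv ℝ F y‖ ≤ K := fun y hy => le_trans (hK0b y hy) (le_max_left _ _)
  -- bound on ‖DDF‖
  obtain ⟨K20, hK20b⟩ := hScomp.exists_bound_of_continuousOn hDDFc.continuousOn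
  set K₂ : ℝ := max K20 0 with hK₂
  have hK₂nn : (0:ℝ) ≤ K₂ := le_max_right _ _
  have hK₂b : ∀ y ∈ S, ‖fderiv ℝ (fderiv ℝ F) y‖ ≤ K₂ :=
    fun y hy => le_trans (hK20b y hy) (le_max_left _ _)
  -- Lipschitz bounds on S
  have FLip : ∀ a ∈ S, ∀ b ∈ S, ‖F a - F b‖ ≤ K * ‖a - b‖ := by
    intro a ha b hb
    exact (convex_closedBall p 3).norm_image_sub_le_of_norm_hasFDerivWithin_le
      (fun y hy => (hFd y).hasFDerivAt.hasFDerivWithinAt) hKb hb ha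
  have DFLip : ∀ a ∈ S, ∀ b ∈ S, ‖fderiv ℝ F a - fderiv ℝ F b‖ ≤ K₂ * ‖a - b‖ := by
    intro a ha b hb
    exact (convex_closedBall p 3).norm_image_sub_le_of_norm_hasFDerivWithin_le
      (fun y hy => (hDFd y).hasFDerivAt.hasFDerivWithinAt) hK₂b hb ha
  set τ₀ : ℝ := min (1 / M) 1 with hτ₀
  have hτ₀pos : (0:ℝ) < τ₀ := lt_min (by positivity) one_pos
  have hτ₀le1 : τ₀ ≤ 1 := min_le_right _ _
  have hMτ₀ : M * τ₀ ≤ 1 := by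
    calc M * τ₀ ≤ M * (1 / M) := by
          apply mul_le_mul_of_nonneg_left (min_le_left _ _) hMpos.le
      _ = 1 := by field_simp
  -- escape bound
  have escape : ∀ z ∈ Metric.closedBall p 1, ∀ τ ∈ Set.Icc (0:ℝ) τ₀, ‖f τ z - z‖ ≤ M * τ := by
    intro z hz
    have key : ∀ τ ∈ Set.Icc (0:ℝ) τ₀,
        ‖f τ z - f 0 z‖ ≤ 2 → ‖F (f τ z)‖ ≤ M := by
      intro τ hτ hb2
      rw [hf0 z] at hb2
      apply hMb
      rw [hS, Metric.mem_closedBall, dist_eq_norm]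
      have hz' : ‖z - p‖ ≤ 1 := by rwa [Metric.mem_closedBall, dist_eq_norm] at hz
      calc ‖f τ z - p‖ ≤ ‖f τ z - z‖ + ‖z - p‖ := norm_sub_le_norm_sub_add_norm_sub _ _ _
        _ ≤ 2 + 1 := add_le_add hb2 hz'
        _ = 3 := by norm_num
    have := bootstrap_bound (g := fun τ => f τ z) (g' := fun τ => F (f τ z))
      (b := τ₀) (C := M) (D := 2) hMpos.le hτ₀pos.le
      (fun τ _ => hflow τ z) key (by linarith)
    intro τ hτ
    simpa only [hf0 z] using this τ hτ
  -- staying in the ball of radius 2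
  have stay : ∀ z ∈ Metric.closedBall p 1, ∀ τ ∈ Set.Icc (0:ℝ) τ₀,
      f τ z ∈ Metric.closedBall p 2 := by
    intro z hz τ hτ
    have hz' : ‖z - p‖ ≤ 1 := by rwa [Metric.mem_closedBall, dist_eq_norm] at hz
    rw [Metric.mem_closedBall, dist_eq_norm]
    calc ‖f τ z - p‖ ≤ ‖f τ z - z‖ + ‖z - p‖ := norm_sub_le_norm_sub_add_norm_sub _ _ _
      _ ≤ M * τ + 1 := add_le_add (escape z hz τ hτ) hz'
      _ ≤ M * τ₀ + 1 := by nlinarith [mul_le_mul_of_nonneg_left hτ.2 hMpos.le]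
      _ ≤ 2 := by linarith
  have ball2S : Metric.closedBall p 2 ⊆ S := Metric.closedBall_subset_closedBall (by norm_num)
  have hp1 : p ∈ Metric.closedBall p 1 := Metric.mem_closedBall_self (by norm_num)
  set L : ℝ := Real.exp K with hL
  have hL1 : (1:ℝ) ≤ L := Real.one_le_exp hKnn
  have hLnn : (0:ℝ) ≤ L := by linarith
  -- Gronwall: Lipschitz dependence on the initial condition
  have gron : ∀ z ∈ Metric.closedBall p 1, ∀ w ∈ Metric.closedBall p 1,
      ∀ τ ∈ Set.Icc (0:ℝ) τ₀, ‖f τ z - f τ w‖ ≤ L * ‖z - w‖ := by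
    intro z hz w hw τ hτ
    have hcont : ContinuousOn (fun τ => f τ z - f τ w) (Set.Icc 0 τ₀) := by
      apply Continuous.continuousOn
      rw [continuous_iff_continuousAt]
      exact fun τ => ((hflow τ z).sub (hflow τ w)).continuousAt
    have hder : ∀ σ ∈ Set.Ico (0:ℝ) τ₀, HasDerivWithinAt (fun τ => f τ z - f τ w)
        (F (f σ z) - F (f σ w)) (Set.Ici σ) σ :=
      fun σ _ => ((hflow σ z).sub (hflow σ w)).hasDerivWithinAt
    have ha : ‖f 0 z - f 0 w‖ ≤ ‖z - w‖ := by rw [hf0, hf0]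
    have hbound : ∀ σ ∈ Set.Ico (0:ℝ) τ₀,
        ‖F (f σ z) - F (f σ w)‖ ≤ K * ‖f σ z - f σ w‖ + 0 := by
      intro σ hσ
      rw [add_zero]
      exact FLip _ (ball2S (stay z hz σ ⟨hσ.1, hσ.2.le⟩)) _ (ball2S (stay w hw σ ⟨hσ.1, hσ.2.le⟩))
    have := norm_le_gronwallBound_of_norm_deriv_right_le hcont hder ha hbound τ hτ
    rw [gronwallBound_ε0, sub_zero] at this
    calc ‖f τ z - f τ w‖ ≤ ‖z - w‖ * Real.exp (K * τ) := this
      _ ≤ ‖z - w‖ * Real.exp (K * 1) := by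
          have h1 : K * τ ≤ K * τ₀ := mul_le_mul_of_nonneg_left hτ.2 hKnn
          have h2 : K * τ₀ ≤ K * 1 := mul_le_mul_of_nonneg_left hτ₀le1 hKnn
          exact mul_le_mul_of_nonneg_left (Real.exp_le_exp.2 (le_trans h1 h2)) (norm_nonneg _)
      _ = L * ‖z - w‖ := by rw [mul_one, hL]; ring
  -- second order: deviation of the difference from its initial value
  have vdiff : ∀ z ∈ Metric.closedBall p 1, ∀ τ ∈ Set.Icc (0:ℝ) τ₀,
      ‖f τ z - f τ p - (z - p)‖ ≤ K * (L * ‖z - p‖) * τ := by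
    intro z hz τ hτ
    have hder : ∀ σ ∈ Set.Icc (0:ℝ) τ₀, HasDerivWithinAt (fun τ => f τ z - f τ p)
        (F (f σ z) - F (f σ p)) (Set.Icc (0:ℝ) τ₀) σ :=
      fun σ _ => ((hflow σ z).sub (hflow σ p)).hasDerivWithinAt
    have hbound : ∀ σ ∈ Set.Icc (0:ℝ) τ₀, ‖F (f σ z) - F (f σ p)‖ ≤ K * (L * ‖z - p‖) := by
      intro σ hσ
      calc ‖F (f σ z) - F (f σ p)‖ ≤ K * ‖f σ z - f σ p‖ :=
            FLip _ (ball2S (stay z hz σ hσ)) _ (ball2S (stay p hp1 σ hσ))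
        _ ≤ K * (L * ‖z - p‖) := mul_le_mul_of_nonneg_left (gron z hz p hp1 σ hσ) hKnn
    have := Convex.norm_image_sub_le_of_norm_hasDerivWithin_le hder hbound
      (convex_Icc _ _) (⟨le_refl 0, hτ₀pos.le⟩ : (0:ℝ) ∈ Set.Icc (0:ℝ) τ₀) hτ
    rw [hf0, hf0, sub_zero, Real.norm_eq_abs, abs_of_nonneg hτ.1] at this
    exact this
  set A : E →L[ℝ] E := fderiv ℝ F p with hA
  have hAK : ‖A‖ ≤ K := hKb p hpS
  -- the main second-order estimate
  have Gest : ∀ z ∈ Metric.closedBall p 1, ∀ h : ℝ, 0 ≤ h → h ≤ τ₀ →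
      ‖f h z - f h p - (z - p) - h • A (z - p)‖ ≤
        ((K₂ * (M * h + ‖z - p‖) + K ^ 2 * h) * (L * ‖z - p‖)) * h := by
    intro z hz h h0 hh
    have hz' : ‖z - p‖ ≤ 1 := by rwa [Metric.mem_closedBall, dist_eq_norm] at hz
    set d : ℝ := ‖z - p‖ with hd
    have hdnn : 0 ≤ d := norm_nonneg _
    set C₁ : ℝ := (K₂ * (M * h + d) + K ^ 2 * h) * (L * d) with hC₁
    have hC₁nn : 0 ≤ C₁ := by positivity
    -- derivative bound for W τ = f τ z - f τ p - τ • A (z - p)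
    have hWder : ∀ σ ∈ Set.Icc (0:ℝ) h,
        HasDerivWithinAt (fun τ => f τ z - f τ p - τ • A (z - p))
          (F (f σ z) - F (f σ p) - A (z - p)) (Set.Icc (0:ℝ) h) σ := by
      intro σ _
      have h1 : HasDerivAt (fun τ : ℝ => τ • A (z - p)) (A (z - p)) σ := by
        simpa using (hasDerivAt_id σ).smul_const (A (z - p))
      exact (((hflow σ z).sub (hflow σ p)).sub h1).hasDerivWithinAt
    have hWbound : ∀ σ ∈ Set.Icc (0:ℝ) h,
        ‖F (f σ z) - F (f σ p) - A (z - p)‖ ≤ C₁ := by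
      intro σ hσ
      have hστ : σ ∈ Set.Icc (0:ℝ) τ₀ := ⟨hσ.1, le_trans hσ.2 hh⟩
      set a := f σ z with ha'
      set b := f σ p with hb'
      set ρ : ℝ := M * h + d with hρ
      have hρnn : 0 ≤ ρ := by positivity
      have hρ2 : ρ ≤ 2 := by
        have h1 : M * h ≤ M * τ₀ := mul_le_mul_of_nonneg_left hh hMpos.le
        have h2 : d ≤ 1 := by rw [hd]; exact hz'
        linarith
      have hball : Metric.closedBall p ρ ⊆ S :=
        Metric.closedBall_subset_closedBall (by linarith)
      have haρ : a ∈ Metric.closedBall p ρ := by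
        rw [Metric.mem_closedBall, dist_eq_norm]
        calc ‖a - p‖ ≤ ‖a - z‖ + ‖z - p‖ := norm_sub_le_norm_sub_add_norm_sub _ _ _
          _ ≤ M * σ + d := add_le_add (escape z hz σ hστ) le_rfl
          _ ≤ ρ := by
              have := mul_le_mul_of_nonneg_left (le_trans hσ.2 (le_refl h)) hMpos.le
              rw [hρ]; linarith
      have hbρ : b ∈ Metric.closedBall p ρ := by
        rw [Metric.mem_closedBall, dist_eq_norm]
        calc ‖b - p‖ ≤ M * σ := by simpa using escape p hp1 σ hστ
          _ ≤ ρ := by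
              have := mul_le_mul_of_nonneg_left hσ.2 hMpos.le
              rw [hρ]; linarith
      -- first piece: Taylor bound for F
      have step1 : ‖F a - F b - A (a - b)‖ ≤ (K₂ * ρ) * ‖a - b‖ := by
        apply (convex_closedBall p ρ).norm_image_sub_le_of_norm_hasFDerivWithin_le'
          (fun ξ hξ => (hFd ξ).hasFDerivAt.hasFDerivWithinAt) _ hbρ haρ
        intro ξ hξ
        have hξ' : ‖ξ - p‖ ≤ ρ := by rwa [Metric.mem_closedBall, dist_eq_norm] at hξ
        calc ‖fderiv ℝ F ξ - A‖ ≤ K₂ * ‖ξ - p‖ := DFLip ξ (hball hξ) p hpS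
          _ ≤ K₂ * ρ := mul_le_mul_of_nonneg_left hξ' hK₂nn
      have hab : ‖a - b‖ ≤ L * d := gron z hz p hp1 σ hστ
      have step2 : ‖A (a - b - (z - p))‖ ≤ K ^ 2 * (L * d) * h := by
        calc ‖A (a - b - (z - p))‖ ≤ ‖A‖ * ‖a - b - (z - p)‖ := A.le_opNorm _
          _ ≤ K * (K * (L * d) * σ) := by
              apply mul_le_mul hAK (vdiff z hz σ hστ) (norm_nonneg _) hKnn
          _ = K ^ 2 * (L * d) * σ := by ring
          _ ≤ K ^ 2 * (L * d) * h := by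
              apply mul_le_mul_of_nonneg_left hσ.2
              exact mul_nonneg (sq_nonneg K) (mul_nonneg hLnn hdnn)
      have hsplit : F a - F b - A (z - p) =
          (F a - F b - A (a - b)) + A (a - b - (z - p)) := by
        rw [map_sub A (a - b) (z - p)]; abel
      calc ‖F a - F b - A (z - p)‖
          ≤ ‖F a - F b - A (a - b)‖ + ‖A (a - b - (z - p))‖ := by
            rw [hsplit]; exact norm_add_le _ _
        _ ≤ (K₂ * ρ) * (L * d) + K ^ 2 * (L * d) * h := by
            apply add_le_add _ step2
            calc ‖F a - F b - A (a - b)‖ ≤ (K₂ * ρ) * ‖a - b‖ := step1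
              _ ≤ (K₂ * ρ) * (L * d) := by
                  apply mul_le_mul_of_nonneg_left hab (by positivity)
        _ = C₁ := by rw [hC₁, hρ]; ring
    have hMVT := Convex.norm_image_sub_le_of_norm_hasDerivWithin_le hWder hWbound
      (convex_Icc _ _) (⟨le_refl 0, h0⟩ : (0:ℝ) ∈ Set.Icc (0:ℝ) h)
      (⟨h0, le_refl h⟩ : h ∈ Set.Icc (0:ℝ) h)
    rw [hf0, hf0, zero_smul, sub_zero, sub_zero, Real.norm_eq_abs, abs_of_nonneg h0] at hMVT
    calc ‖f h z - f h p - (z - p) - h • A (z - p)‖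
        = ‖f h z - f h p - h • A (z - p) - (z - p)‖ := by rw [sub_right_comm]
      _ ≤ C₁ * h := hMVT
      _ = ((K₂ * (M * h + ‖z - p‖) + K ^ 2 * h) * (L * ‖z - p‖)) * h := by rw [hC₁, hd]
  -- conclude the operator-norm bound
  refine ⟨(K₂ * M + K ^ 2) * L, by positivity, τ₀, hτ₀pos, fun h h0 hh => ?_⟩
  have hCh2 : (0:ℝ) ≤ (K₂ * M + K ^ 2) * L * h ^ 2 := by positivity
  apply ContinuousLinearMap.opNorm_le_bound _ hCh2
  intro v
  -- derivative of G z = f h z - z - h • A (z - p) at p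
  have hlin : HasFDerivAt (fun z => h • A (z - p)) (h • A) p := by
    have h1 : HasFDerivAt (fun z : E => z - p) (ContinuousLinearMap.id ℝ E) p :=
      (hasFDerivAt_id p).sub_const p
    have h2 : HasFDerivAt (fun z : E => A (z - p)) A p := by
      have := A.hasFDerivAt.comp p h1
      rw [ContinuousLinearMap.comp_id] at this
      exact this
    exact h2.const_smul h
  have hGd : HasFDerivAt (fun z => f h z - z - h • A (z - p))
      (fderiv ℝ (f h) p - ContinuousLinearMap.id ℝ E - h • A) p :=
    ((((hfC2 h).differentiable (by norm_num) p).hasFDerivAt).sub (hasFDerivAt_id p)).sub hlin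
  set B : E →L[ℝ] E := fderiv ℝ (f h) p - ContinuousLinearMap.id ℝ E - h • A with hB
  have hc : Tendsto (fun n : ℕ => ‖(n:ℝ)‖) atTop atTop := by
    simp only [Real.norm_natCast]
    exact tendsto_natCast_atTop_atTop
  have hlim := (hGd.lim v hc).norm
  -- the comparison sequence
  have hinv : Tendsto (fun n : ℕ => ((n:ℝ))⁻¹) atTop (𝓝 0) :=
    tendsto_inv_atTop_zero.comp tendsto_natCast_atTop_atTop
  have hbseq : Tendsto (fun n : ℕ =>
      ((K₂ * (M * h + ((n:ℝ))⁻¹ * ‖v‖) + K ^ 2 * h) * (L * ‖v‖)) * h) atTop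
      (𝓝 (((K₂ * (M * h + 0 * ‖v‖) + K ^ 2 * h) * (L * ‖v‖)) * h)) := by
    apply Tendsto.mul_const
    apply Tendsto.mul_const
    apply Tendsto.add_const
    apply Tendsto.const_mul
    exact (hinv.mul_const ‖v‖).const_add (M * h)
  have hle : ‖B v‖ ≤ ((K₂ * (M * h + 0 * ‖v‖) + K ^ 2 * h) * (L * ‖v‖)) * h := by
    apply le_of_tendsto_of_tendsto hlim hbseq
    filter_upwards [eventually_ge_atTop (⌈‖v‖⌉₊ + 1)] with n hn
    have hn1 : 1 ≤ n := le_trans (Nat.le_add_left 1 _) hn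
    have hnpos : (0:ℝ) < (n:ℝ) := by exact_mod_cast hn1
    have hnv : ‖v‖ ≤ (n:ℝ) := by
      calc ‖v‖ ≤ (⌈‖v‖⌉₊ : ℝ) := Nat.le_ceil _
        _ ≤ (n:ℝ) := by exact_mod_cast le_trans (Nat.le_add_right _ 1) hn
    set ε : ℝ := ((n:ℝ))⁻¹ with hε
    have hεpos : 0 < ε := by positivity
    set z : E := p + ε • v with hz
    have hzp : z - p = ε • v := by rw [hz]; abel
    have hznorm : ‖z - p‖ = ε * ‖v‖ := by rw [hzp, norm_smul, Real.norm_eq_abs, abs_of_pos hεpos]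
    have hzball : z ∈ Metric.closedBall p 1 := by
      rw [Metric.mem_closedBall, dist_eq_norm, hznorm]
      calc ε * ‖v‖ ≤ ε * (n:ℝ) := mul_le_mul_of_nonneg_left hnv hεpos.le
        _ = 1 := by rw [hε]; field_simp
    have hGdiff : (fun z => f h z - z - h • A (z - p)) z
        - (fun z => f h z - z - h • A (z - p)) p
        = f h z - f h p - (z - p) - h • A (z - p) := by
      simp only [sub_self, map_zero, smul_zero, sub_zero]
      abel
    have hest := Gest z hzball h h0 hh
    rw [hznorm] at hest
    show ‖(n:ℝ) • ((fun z => f h z - z - h • A (z - p)) (p + ε • v)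
        - (fun z => f h z - z - h • A (z - p)) p)‖ ≤ _
    rw [← hz, hGdiff, norm_smul, Real.norm_natCast]
    calc (n:ℝ) * ‖f h z - f h p - (z - p) - h • A (z - p)‖
        ≤ (n:ℝ) * (((K₂ * (M * h + ε * ‖v‖) + K ^ 2 * h) * (L * (ε * ‖v‖))) * h) := by
          apply mul_le_mul_of_nonneg_left hest hnpos.le
      _ = ((K₂ * (M * h + ε * ‖v‖) + K ^ 2 * h) * (L * ‖v‖)) * h * ((n:ℝ) * ε) := by ring
      _ = ((K₂ * (M * h + ε * ‖v‖) + K ^ 2 * h) * (L * ‖v‖)) * h := by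
          rw [hε, mul_inv_cancel₀ (ne_of_gt hnpos), mul_one]
  calc ‖B v‖ ≤ ((K₂ * (M * h + 0 * ‖v‖) + K ^ 2 * h) * (L * ‖v‖)) * h := hle
    _ = (K₂ * M + K ^ 2) * L * h ^ 2 * ‖v‖ := by ring



lemma flow_fderiv_hasDerivAt_zero
    (F : E → E) (hF : ContDiff ℝ 2 F)
    (f : ℝ → E → E)
    (hf0 : ∀ x : E, f 0 x = x)
    (hflow : ∀ t : ℝ, ∀ x : E, HasDerivAt (fun τ : ℝ => f τ x) (F (f t x)) t)
    (hfC2 : ∀ t : ℝ, ContDiff ℝ 2 (f t)) (p : E) :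
    HasDerivAt (fun h : ℝ => fderiv ℝ (f h) p) (fderiv ℝ F p) 0 := by
  obtain ⟨C₁, hC₁, τ₁, hτ₁, hb₁⟩ := flow_fderiv_taylor F hF f hf0 hflow hfC2 p
  -- the reversed flow
  have hFneg : ContDiff ℝ 2 (fun y => -F y) := hF.neg
  have hf0' : ∀ x : E, f (-(0:ℝ)) x = x := by intro x; rw [neg_zero]; exact hf0 x
  have hflow' : ∀ t : ℝ, ∀ x : E,
      HasDerivAt (fun τ : ℝ => f (-τ) x) (-F (f (-t) x)) t := by
    intro t x
    have h1 : HasDerivAt (fun τ : ℝ => -τ) (-1 : ℝ) t := hasDerivAt_neg' t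
    have h2 := (hflow (-t) x).scomp t h1
    simpa [Function.comp_def] using h2
  obtain ⟨C₂, hC₂, τ₂, hτ₂, hb₂⟩ := flow_fderiv_taylor (fun y => -F y) hFneg
    (fun τ => f (-τ)) hf0' hflow' (fun τ => hfC2 (-τ)) p
  set A : E →L[ℝ] E := fderiv ℝ F p with hA
  have key : ∀ h : ℝ, |h| ≤ min τ₁ τ₂ →
      ‖fderiv ℝ (f h) p - ContinuousLinearMap.id ℝ E - h • A‖ ≤ (max C₁ C₂) * h ^ 2 := by
    intro h hh
    rcases le_or_gt 0 h with h0 | h0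
    · have habs : |h| = h := abs_of_nonneg h0
      have := hb₁ h h0 (by rw [← habs]; exact le_trans hh (min_le_left _ _))
      calc ‖fderiv ℝ (f h) p - ContinuousLinearMap.id ℝ E - h • A‖ ≤ C₁ * h ^ 2 := this
        _ ≤ (max C₁ C₂) * h ^ 2 :=
          mul_le_mul_of_nonneg_right (le_max_left _ _) (sq_nonneg h)
    · have habs : |h| = -h := abs_of_neg h0
      have hs0 : 0 ≤ -h := by linarith
      have hsτ : -h ≤ τ₂ := by rw [← habs]; exact le_trans hh (min_le_right _ _)
      have := hb₂ (-h) hs0 hsτ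
      have heq : fderiv ℝ (fun y => -F y) p = -A := fderiv_neg
      rw [heq, neg_neg] at this
      have heq2 : (-h) • (-A) = h • A := by rw [smul_neg, neg_smul, neg_neg]
      rw [heq2, neg_sq] at this
      calc ‖fderiv ℝ (f h) p - ContinuousLinearMap.id ℝ E - h • A‖ ≤ C₂ * h ^ 2 := this
        _ ≤ (max C₁ C₂) * h ^ 2 :=
          mul_le_mul_of_nonneg_right (le_max_right _ _) (sq_nonneg h)
  have hΦ0 : fderiv ℝ (f 0) p = ContinuousLinearMap.id ℝ E := by
    rw [show f 0 = id from funext hf0]; exact fderiv_id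
  set Cm : ℝ := max C₁ C₂ with hCm
  have hCmnn : 0 ≤ Cm := le_trans hC₁ (le_max_left _ _)
  rw [hasDerivAt_iff_isLittleO, Asymptotics.isLittleO_iff]
  intro c hc
  have hδpos : 0 < min (min τ₁ τ₂) (c / (Cm + 1)) := by
    apply lt_min (lt_min hτ₁ hτ₂); positivity
  set δ : ℝ := min (min τ₁ τ₂) (c / (Cm + 1)) with hδ
  filter_upwards [Metric.ball_mem_nhds (0:ℝ) hδpos] with h hh
  rw [Metric.mem_ball, Real.dist_eq, sub_zero] at hh
  have hh1 : |h| ≤ min τ₁ τ₂ := le_trans hh.le (min_le_left _ _)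
  have hh2 : |h| ≤ c / (Cm + 1) := le_trans hh.le (min_le_right _ _)
  have hkey := key h hh1
  rw [hΦ0, sub_zero]
  calc ‖fderiv ℝ (f h) p - ContinuousLinearMap.id ℝ E - h • A‖ ≤ Cm * h ^ 2 := hkey
    _ = Cm * |h| * |h| := by rw [← sq_abs h]; ring
    _ ≤ Cm * (c / (Cm + 1)) * |h| := by
        apply mul_le_mul_of_nonneg_right _ (abs_nonneg h)
        exact mul_le_mul_of_nonneg_left hh2 hCmnn
    _ ≤ c * |h| := by
        apply mul_le_mul_of_nonneg_right _ (abs_nonneg h)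
        have h3 : Cm * (c / (Cm + 1)) ≤ (Cm + 1) * (c / (Cm + 1)) :=
          mul_le_mul_of_nonneg_right (by linarith) (by positivity)
        have h4 : (Cm + 1) * (c / (Cm + 1)) = c := by field_simp
        linarith
    _ = c * ‖h‖ := by rw [Real.norm_eq_abs]

theorem equivariant_divergence_stmt10'
    (F : E → E) (hF : ContDiff ℝ 2 F)
    (f : ℝ → E → E)
    (hf0 : ∀ x : E, f 0 x = x)
    (hfadd : ∀ s t : ℝ, ∀ x : E, f (s + t) x = f s (f t x))
    (hflow : ∀ t : ℝ, ∀ x : E, HasDerivAt (fun τ : ℝ => f τ x) (F (f t x)) t)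
    (hfC2 : ∀ t : ℝ, ContDiff ℝ 2 (f t))
    (x : E) (ν₀ : E →L[ℝ] ℝ)
    (ν : ℝ → (E →L[ℝ] ℝ))
    (hν : ∀ t : ℝ, ν t = ν₀.comp (fderiv ℝ (f (-t)) (f t x)))
    (X : E → E) (hX : ContDiff ℝ 1 X)
    (η : ℝ → ℝ)
    (hη : ∀ t : ℝ, η t = ν t (X (f t x))) :
    ∀ t : ℝ, HasDerivAt η
      (ν t (fderiv ℝ X (f t x) (F (f t x)) - fderiv ℝ F (f t x) (X (f t x)))) t := by
  intro t
  have hdiff : ∀ s : ℝ, Differentiable ℝ (f s) := fun s => (hfC2 s).differentiable (by norm_num)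
  set p : E := f t x with hp
  set A : E →L[ℝ] E := fderiv ℝ F p with hA
  -- basic group identities
  have hinv_comp : ∀ s : ℝ, ∀ z : E, f (-s) (f s z) = z := by
    intro s z
    rw [← hfadd (-s) s z, neg_add_cancel, hf0]
  -- chain rule identity
  have hchain1 : ∀ s : ℝ, ∀ z : E,
      (fderiv ℝ (f (-s)) (f s z)).comp (fderiv ℝ (f s) z) = ContinuousLinearMap.id ℝ E := by
    intro s z
    have h1 : fderiv ℝ (f (-s) ∘ f s) z
        = (fderiv ℝ (f (-s)) (f s z)).comp (fderiv ℝ (f s) z) :=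
      fderiv_comp z ((hdiff (-s)) _) ((hdiff s) _)
    rw [← h1, show f (-s) ∘ f s = id from funext (hinv_comp s), fderiv_id]
  -- Ring.inverse of the flow derivative
  have hRinv : ∀ h : ℝ, Ring.inverse (fderiv ℝ (f h) p) = fderiv ℝ (f (-h)) (f h p) := by
    intro h
    have hval_inv : fderiv ℝ (f h) p * fderiv ℝ (f (-h)) (f h p) = 1 := by
      have h2 := hchain1 (-h) (f h p)
      rw [neg_neg, hinv_comp h p] at h2
      rw [ContinuousLinearMap.mul_def, ContinuousLinearMap.one_def]
      exact h2
    have hinv_val : fderiv ℝ (f (-h)) (f h p) * fderiv ℝ (f h) p = 1 := by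
      have h2 := hchain1 h p
      rw [ContinuousLinearMap.mul_def, ContinuousLinearMap.one_def]
      exact h2
    exact Ring.inverse_unit ⟨fderiv ℝ (f h) p, fderiv ℝ (f (-h)) (f h p), hval_inv, hinv_val⟩
  -- rewriting η near t
  have hq : ∀ h : ℝ, f (t + h) x = f h p := by
    intro h
    rw [hp, ← hfadd h t x, add_comm t h]
  have hν' : ∀ h : ℝ, ν (t + h) = (ν t).comp (Ring.inverse (fderiv ℝ (f h) p)) := by
    intro h
    have hsplit : f (-(t + h)) = f (-t) ∘ f (-h) := by
      funext z
      rw [neg_add]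
      exact hfadd (-t) (-h) z
    rw [hν (t + h), hν t, hq h, hsplit,
      fderiv_comp (f h p) ((hdiff (-t)) _) ((hdiff (-h)) _), hinv_comp h p, hRinv h, hp,
      ContinuousLinearMap.comp_assoc]
  have hkeyfun : ∀ h : ℝ,
      η (t + h) = (ν t) ((Ring.inverse (fderiv ℝ (f h) p)) (X (f h p))) := by
    intro h
    rw [hη (t + h), hν' h, hq h, ContinuousLinearMap.comp_apply]
  -- derivative of the inverse derivative cocycle at 0
  have hΦ : HasDerivAt (fun h : ℝ => fderiv ℝ (f h) p) A 0 :=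
    flow_fderiv_hasDerivAt_zero F hF f hf0 hflow hfC2 p
  have hΦ0 : fderiv ℝ (f 0) p = (1 : E →L[ℝ] E) := by
    rw [show f 0 = id from funext hf0, fderiv_id]
    rfl
  have hinv' : HasFDerivAt (Ring.inverse : (E →L[ℝ] E) → (E →L[ℝ] E))
      (-(ContinuousLinearMap.mulLeftRight ℝ (E →L[ℝ] E) 1 1)) (fderiv ℝ (f 0) p) := by
    rw [hΦ0]
    simpa using hasFDerivAt_ringInverse (𝕜 := ℝ) (1 : (E →L[ℝ] E)ˣ)
  have hN : HasDerivAt (fun h : ℝ => Ring.inverse (fderiv ℝ (f h) p)) (-A) 0 := by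
    have h2 := hinv'.comp_hasDerivAt 0 hΦ
    have h3 : (-(ContinuousLinearMap.mulLeftRight ℝ (E →L[ℝ] E) 1 1)) A = -A := by
      simp [ContinuousLinearMap.mulLeftRight_apply]
    rwa [h3] at h2
  -- derivative of h ↦ X (f h p) at 0
  have hcurve : HasDerivAt (fun h : ℝ => f h p) p 0 → True := fun _ => trivial
  have hcurve0 : HasDerivAt (fun h : ℝ => f h p) (F p) 0 := by
    have := hflow 0 p
    rwa [hf0 p] at this
  have hXp : HasFDerivAt X (fderiv ℝ X p) (f 0 p) := by
    rw [hf0 p]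
    exact (hX.differentiable (by norm_num) p).hasFDerivAt
  have hc : HasDerivAt (fun h : ℝ => X (f h p)) ((fderiv ℝ X p) (F p)) 0 :=
    hXp.comp_hasDerivAt 0 hcurve0
  -- combine
  have hG := hN.clm_apply hc
  have hval : (-A) (X (f 0 p)) + (Ring.inverse (fderiv ℝ (f 0) p)) ((fderiv ℝ X p) (F p))
      = (fderiv ℝ X p) (F p) - A (X p) := by
    rw [hf0 p, hΦ0, Ring.inverse_one]
    simp only [ContinuousLinearMap.neg_apply, ContinuousLinearMap.one_apply]
    abel
  rw [hval] at hG
  have hη2 : HasDerivAt (fun h : ℝ => η (t + h))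
      (ν t ((fderiv ℝ X p) (F p) - A (X p))) 0 := by
    have h2 : HasDerivAt (fun h : ℝ => (ν t) ((Ring.inverse (fderiv ℝ (f h) p)) (X (f h p))))
        (ν t ((fderiv ℝ X p) (F p) - A (X p))) 0 :=
      (ν t).hasFDerivAt.comp_hasDerivAt 0 hG
    have h3 : (fun h : ℝ => (ν t) ((Ring.inverse (fderiv ℝ (f h) p)) (X (f h p))))
        = fun h : ℝ => η (t + h) := funext fun h => (hkeyfun h).symm
    rwa [h3] at h2
  -- shift to t
  have hη3 := HasDerivAt.comp_const_add (f := fun h : ℝ => η (t + h))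
    (f' := ν t ((fderiv ℝ X p) (F p) - A (X p))) (-t) t
    (by rw [neg_add_cancel]; exact hη2)
  exact hη3.congr_of_eventuallyEq (Filter.Eventually.of_forall fun s =>
    (congrArg η (by ring : t + (-t + s) = s)).symm)



end AuxFlow

/-- pairing of the adjoint covector with a vector field differentiates
to the pairing with the Lie derivative `L_F X = ∇_F X − ∇_X F`.
Fix `x ∈ E`, `ν₀ : E →L[ℝ] ℝ`, set `ν t := ν₀ ∘ D(f (−t))(f t x)`, and let `X` be a
C¹ vector field.  Then `η t := ν t (X (f t x))` is differentiable with
`η'(t) = ν t (DX(f t x)(F (f t x)) − DF(f t x)(X (f t x)))` for all `t`. -/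
theorem equivariant_divergence_stmt10
    {E : Type*} [NormedAddCommGroup E] [NormedSpace ℝ E] [FiniteDimensional ℝ E]
    (F : E → E) (hF : ContDiff ℝ 2 F)
    (f : ℝ → E → E)
    (hf0 : ∀ x : E, f 0 x = x)
    (hfadd : ∀ s t : ℝ, ∀ x : E, f (s + t) x = f s (f t x))
    (hflow : ∀ t : ℝ, ∀ x : E, HasDerivAt (fun τ : ℝ => f τ x) (F (f t x)) t)
    (hfC2 : ∀ t : ℝ, ContDiff ℝ 2 (f t))
    (x : E) (ν₀ : E →L[ℝ] ℝ)
    (ν : ℝ → (E →L[ℝ] ℝ))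
    (hν : ∀ t : ℝ, ν t = ν₀.comp (fderiv ℝ (f (-t)) (f t x)))
    (X : E → E) (hX : ContDiff ℝ 1 X)
    (η : ℝ → ℝ)
    (hη : ∀ t : ℝ, η t = ν t (X (f t x))) :
    ∀ t : ℝ, HasDerivAt η
      (ν t (fderiv ℝ X (f t x) (F (f t x)) - fderiv ℝ F (f t x) (X (f t x)))) t :=
  equivariant_divergence_stmt10' F hF f hf0 hfadd hflow hfC2 x ν₀ ν hν X hX η hη
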